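/- Consider the problem (P): C-minimize f(x) subject to g(x) ∈ −K, where X ⊆ ℝ^s is open, f : X → ℝ^n and g : X → ℝ^m are Fréchet differentiable, and C ⊆ ℝ^n, K ⊆ ℝ^m are closed convex cones with vertex at the origin whose positive polar cones C* and K* are pointed. Then (P) is FJ-pseudoinvex if and only if every Fritz John stationary point of (P) is a weakly efficient global solution of (P). -/

import Mathlib

open Matrix Set

/-- The positive polar cone of a set `A ⊆ ℝ^d`. -/
def polarCone {d : ℕ} (A : Set (Fin d → ℝ)) : Set (Fin d → ℝ) :=
  {l | ∀ x ∈ A, 0 ≤ l ⬝ᵥ x}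

/-- For a feasible point `x`, `M*(x) := {μ ∈ K* | μ ⬝ᵥ g x = 0}`. -/
def Mstar {s m : ℕ} (K : Set (Fin m → ℝ)) (g : (Fin s → ℝ) → (Fin m → ℝ))
    (x : Fin s → ℝ) : Set (Fin m → ℝ) :=
  {μ | μ ∈ polarCone K ∧ μ ⬝ᵥ g x = 0}

lemma continuous_dot_right {d : ℕ} (x : Fin d → ℝ) :
    Continuous fun l : Fin d → ℝ => l ⬝ᵥ x := by
  show Continuous fun l : Fin d → ℝ => ∑ i, l i * x i
  exact continuous_finset_sum _ fun i _ => (continuous_apply i).mul continuous_const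

lemma polarCone_isClosed {d : ℕ} (A : Set (Fin d → ℝ)) : IsClosed (polarCone A) := by
  have h : polarCone A = ⋂ x ∈ A, {l : Fin d → ℝ | 0 ≤ l ⬝ᵥ x} := by
    ext l; simp [polarCone, Set.mem_iInter]
  rw [h]
  exact isClosed_biInter fun x _ => isClosed_le continuous_const (continuous_dot_right x)

lemma polarCone_smul {d : ℕ} (A : Set (Fin d → ℝ)) {t : ℝ} (ht : 0 ≤ t) {l : Fin d → ℝ}
    (hl : l ∈ polarCone A) : t • l ∈ polarCone A := by
  intro x hx
  rw [smul_dotProduct]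
  exact smul_nonneg ht (hl x hx)

lemma polarCone_zero_mem {d : ℕ} (A : Set (Fin d → ℝ)) : (0 : Fin d → ℝ) ∈ polarCone A := by
  intro x hx; simp

lemma polarCone_convex {d : ℕ} (A : Set (Fin d → ℝ)) : Convex ℝ (polarCone A) := by
  intro a ha b hb ta tb hta htb _
  intro x hx
  rw [add_dotProduct, smul_dotProduct, smul_dotProduct]
  exact add_nonneg (smul_nonneg hta (ha x hx)) (smul_nonneg htb (hb x hx))

lemma abs_dot_le {d : ℕ} (u w : Fin d → ℝ) : |u ⬝ᵥ w| ≤ d * ‖u‖ * ‖w‖ := by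
  have h1 : |u ⬝ᵥ w| ≤ ∑ i, |u i * w i| := Finset.abs_sum_le_sum_abs _ _
  have h2 : ∀ i : Fin d, |u i * w i| ≤ ‖u‖ * ‖w‖ := by
    intro i
    rw [abs_mul]
    have hu : |u i| ≤ ‖u‖ := by
      simpa using norm_le_pi_norm u i
    have hw : |w i| ≤ ‖w‖ := by
      simpa using norm_le_pi_norm w i
    exact mul_le_mul hu hw (abs_nonneg _) (norm_nonneg _)
  calc |u ⬝ᵥ w| ≤ ∑ i : Fin d, |u i * w i| := h1
    _ ≤ ∑ _i : Fin d, ‖u‖ * ‖w‖ := Finset.sum_le_sum fun i _ => h2 i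
    _ = d * ‖u‖ * ‖w‖ := by simp [mul_assoc]

lemma dot_pos_of_mem_interior_polar {d : ℕ} {P : Set (Fin d → ℝ)} {z : Fin d → ℝ}
    (hz : z ∈ interior (polarCone P)) {l : Fin d → ℝ} (hl : l ∈ P) (hl0 : l ≠ 0) :
    0 < z ⬝ᵥ l := by
  obtain ⟨ε, hε, hball⟩ := Metric.mem_nhds_iff.1 (mem_interior_iff_mem_nhds.1 hz)
  have hln : 0 < ‖l‖ := norm_pos_iff.2 hl0
  set c : ℝ := ε / (2 * ‖l‖) with hc
  have hcpos : 0 < c := by positivity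
  have hz' : z - c • l ∈ polarCone P := by
    apply hball
    simp only [Metric.mem_ball, dist_eq_norm]
    have : z - c • l - z = -(c • l) := by abel
    rw [this, norm_neg, norm_smul, Real.norm_eq_abs, abs_of_pos hcpos, hc]
    have heq : ε / (2 * ‖l‖) * ‖l‖ = ε / 2 := by
      field_simp
    rw [heq]
    linarith
  have hll : 0 < l ⬝ᵥ l := by
    rcases lt_or_eq_of_le (Finset.sum_nonneg fun i _ => mul_self_nonneg (l i) : (0:ℝ) ≤ ∑ i, l i * l i) with h | h
    · exact h
    · exact absurd (dotProduct_self_eq_zero.1 h.symm) hl0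
  have h0 := hz' l hl
  rw [sub_dotProduct, smul_dotProduct] at h0
  have : c * (l ⬝ᵥ l) ≤ z ⬝ᵥ l := by
    simpa [smul_eq_mul] using sub_nonneg.1 h0
  nlinarith

lemma mem_interior_polar_of_dot_pos {d : ℕ} {P : Set (Fin d → ℝ)} (hP : IsClosed P)
    (hscale : ∀ t : ℝ, 0 ≤ t → ∀ y ∈ P, t • y ∈ P)
    {z : Fin d → ℝ} (h : ∀ l ∈ P, l ≠ 0 → 0 < l ⬝ᵥ z) :
    z ∈ interior (polarCone P) := by
  set S : Set (Fin d → ℝ) := P ∩ Metric.sphere 0 1 with hSdef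
  rcases S.eq_empty_or_nonempty with hS | hS
  · -- P ⊆ {0}
    have hP0 : ∀ l ∈ P, l = 0 := by
      intro l hl
      by_contra hl0
      have hln : 0 < ‖l‖ := norm_pos_iff.2 hl0
      have : (‖l‖⁻¹ • l) ∈ S := by
        constructor
        · exact hscale _ (by positivity) l hl
        · simp [norm_smul, abs_of_pos (inv_pos.2 hln), inv_mul_cancel₀ hln.ne']
      rw [hS] at this
      exact this
    have : polarCone P = univ := by
      apply eq_univ_of_forall
      intro w x hx
      rw [hP0 x hx]
      simp
    rw [this, interior_univ]
    trivial
  · have hScomp : IsCompact S := (isCompact_sphere 0 1).inter_left hP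
    obtain ⟨l₀, hl₀S, hmin⟩ :=
      hScomp.exists_isMinOn hS ((continuous_dot_right z).continuousOn)
    set δ : ℝ := l₀ ⬝ᵥ z with hδ
    have hl₀0 : l₀ ≠ 0 := by
      intro h0
      have := hl₀S.2
      rw [h0] at this
      simp at this
    have hδpos : 0 < δ := h l₀ hl₀S.1 hl₀0
    rw [mem_interior_iff_mem_nhds, Metric.mem_nhds_iff]
    refine ⟨δ / (d + 1), by positivity, ?_⟩
    intro z' hz'
    simp only [Metric.mem_ball, dist_eq_norm] at hz'
    intro x hx
    rcases eq_or_ne x 0 with rfl | hx0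
    · simp
    · have hxn : 0 < ‖x‖ := norm_pos_iff.2 hx0
      set u : Fin d → ℝ := ‖x‖⁻¹ • x with hu
      have huS : u ∈ S := by
        constructor
        · exact hscale _ (by positivity) x hx
        · simp [hu, norm_smul, abs_of_pos (inv_pos.2 hxn), inv_mul_cancel₀ hxn.ne']
      have hun : ‖u‖ = 1 := by simpa using huS.2
      have h1 : δ ≤ u ⬝ᵥ z := hmin huS
      have h2 : |u ⬝ᵥ (z' - z)| ≤ d * (δ / (d+1)) := by
        calc |u ⬝ᵥ (z' - z)| ≤ d * ‖u‖ * ‖z' - z‖ := abs_dot_le u (z' - z)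
          _ = d * ‖z' - z‖ := by rw [hun]; ring
          _ ≤ d * (δ / (d+1)) := by
              apply mul_le_mul_of_nonneg_left (le_of_lt hz') (by positivity)
      have h3 : 0 ≤ u ⬝ᵥ z' := by
        have hdz : u ⬝ᵥ z' = u ⬝ᵥ z + u ⬝ᵥ (z' - z) := by
          rw [← dotProduct_add]
          congr 1
          abel
        have habs := abs_le.1 h2
        have hkey : (d : ℝ) * (δ / (d+1)) < δ := by
          have hd1 : (0:ℝ) < (d:ℝ) + 1 := by positivity
          have h' : (d:ℝ) * (δ / (↑d+1)) = (d:ℝ) * δ / (↑d+1) := by ring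
          rw [h', div_lt_iff₀ hd1]
          nlinarith
        linarith
      have : z' ⬝ᵥ x = ‖x‖ * (u ⬝ᵥ z') := by
        rw [dotProduct_comm, hu, smul_dotProduct, smul_eq_mul]
        field_simp
      rw [this]
      positivity

lemma pi_single_expand {d : ℕ} (y : Fin d → ℝ) :
    y = ∑ i, y i • (Pi.single i 1 : Fin d → ℝ) := by
  funext k
  rw [Finset.sum_apply]
  simp [Pi.single_apply]

lemma clm_exists_dot {d : ℕ} (f : (Fin d → ℝ) →L[ℝ] ℝ) :
    ∃ w : Fin d → ℝ, ∀ y, f y = y ⬝ᵥ w := by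
  refine ⟨fun i => f (Pi.single i 1), fun y => ?_⟩
  conv_lhs => rw [pi_single_expand y]
  rw [map_sum]
  simp [dotProduct, _root_.map_smul, smul_eq_mul]

lemma dot_clm_eq_sum {s d : ℕ} (T : (Fin s → ℝ) →L[ℝ] (Fin d → ℝ)) (v : Fin d → ℝ)
    (η : Fin s → ℝ) : v ⬝ᵥ T η = ∑ j, η j * (v ⬝ᵥ T (Pi.single j 1)) := by
  have hT : T η = ∑ j, η j • T (Pi.single j 1) := by
    conv_lhs => rw [pi_single_expand η]
    rw [map_sum]
    simp [_root_.map_smul]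
  rw [hT]
  simp only [dotProduct, Finset.sum_apply, Pi.smul_apply, smul_eq_mul, Finset.mul_sum]
  rw [Finset.sum_comm]
  apply Finset.sum_congr rfl
  intro j _
  apply Finset.sum_congr rfl
  intro k _
  ring

lemma isCompact_convexHull' {d' : ℕ} {A : Set (Fin d' → ℝ)} (hA : IsCompact A) :
    IsCompact (convexHull ℝ A) := by
  classical
  rcases A.eq_empty_or_nonempty with rfl | ⟨a₀, ha₀⟩
  · simp
  set N := Module.finrank ℝ (Fin d' → ℝ) + 1 with hN
  set Φ : (Fin N → ℝ) × (Fin N → (Fin d' → ℝ)) → (Fin d' → ℝ) :=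
    fun p => ∑ i, p.1 i • p.2 i with hΦdef
  have hΦ : Continuous Φ :=
    continuous_finset_sum _ fun i _ =>
      ((continuous_apply i).comp continuous_fst).smul ((continuous_apply i).comp continuous_snd)
  set Dom : Set ((Fin N → ℝ) × (Fin N → (Fin d' → ℝ))) :=
    (stdSimplex ℝ (Fin N)) ×ˢ (Set.univ.pi fun _ : Fin N => A) with hDom
  have hDomComp : IsCompact Dom :=
    IsCompact.prod (isCompact_stdSimplex (𝕜 := ℝ) (ι := Fin N)) (isCompact_univ_pi fun _ => hA)
  have himg : convexHull ℝ A = Φ '' Dom := by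
    apply Subset.antisymm
    · intro x hx
      obtain ⟨ι, hfin, z, w, hzA, hai, hw0, hw1, hzx⟩ :=
        eq_pos_convex_span_of_mem_convexHull hx
      have hcard : Fintype.card ι ≤ N := by
        rcases isEmpty_or_nonempty ι with hie | hne
        · simp [Fintype.card_eq_zero]
        · have hc := hai.finrank_vectorSpan_add_one
          have hle : Module.finrank ℝ (vectorSpan ℝ (Set.range z)) ≤
              Module.finrank ℝ (Fin d' → ℝ) := Submodule.finrank_le _
          omega
      obtain ⟨e⟩ : Nonempty (ι ↪ Fin N) :=
        Function.Embedding.nonempty_iff_card_le.2 (by simpa using hcard)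
      set w' : Fin N → ℝ := fun j => if h : ∃ i, e i = j then w h.choose else 0 with hw'
      set z' : Fin N → (Fin d' → ℝ) :=
        fun j => if h : ∃ i, e i = j then z h.choose else a₀ with hz'
      have hch : ∀ i : ι, (show ∃ i', e i' = e i from ⟨i, rfl⟩).choose = i := by
        intro i
        exact e.injective (show ∃ i', e i' = e i from ⟨i, rfl⟩).choose_spec
      have hw'e : ∀ i : ι, w' (e i) = w i := by
        intro i
        have h0 : w' (e i) = if h : ∃ i', e i' = e i then w h.choose else 0 := rfl
        rw [h0, dif_pos ⟨i, rfl⟩, hch i]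
      have hz'e : ∀ i : ι, z' (e i) = z i := by
        intro i
        have h0 : z' (e i) = if h : ∃ i', e i' = e i then z h.choose else a₀ := rfl
        rw [h0, dif_pos ⟨i, rfl⟩, hch i]
      set t : Finset (Fin N) := Finset.univ.map e with ht
      have hnot : ∀ j ∉ t, ¬∃ i, e i = j := by
        intro j hj ⟨i, hi⟩
        exact hj (ht ▸ Finset.mem_map.2 ⟨i, Finset.mem_univ i, hi⟩)
      have hw'sum : ∑ j, w' j = ∑ i, w i := by
        calc ∑ j, w' j = ∑ j ∈ t, w' j := by
              refine (Finset.sum_subset (Finset.subset_univ t) ?_).symm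
              intro j _ hj
              exact dif_neg (hnot j hj)
          _ = ∑ i, w' (e i) := by rw [ht, Finset.sum_map]
          _ = ∑ i, w i := by simp only [hw'e]
      have hwz'sum : ∑ j, w' j • z' j = ∑ i, w i • z i := by
        calc ∑ j, w' j • z' j = ∑ j ∈ t, w' j • z' j := by
              refine (Finset.sum_subset (Finset.subset_univ t) ?_).symm
              intro j _ hj
              rw [show w' j = 0 from dif_neg (hnot j hj), zero_smul]
          _ = ∑ i, w' (e i) • z' (e i) := by rw [ht, Finset.sum_map]
          _ = ∑ i, w i • z i := by simp only [hw'e, hz'e]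
      have hmemDom : (w', z') ∈ Dom := by
        constructor
        · constructor
          · intro j
            show 0 ≤ if h : ∃ i, e i = j then w h.choose else 0
            split
            · exact le_of_lt (hw0 _)
            · exact le_refl 0
          · rw [hw'sum, hw1]
        · intro j _
          show (if h : ∃ i, e i = j then z h.choose else a₀) ∈ A
          split
          · exact hzA ⟨_, rfl⟩
          · exact ha₀
      refine ⟨(w', z'), hmemDom, ?_⟩
      rw [hΦdef]
      dsimp only
      rw [hwz'sum, hzx]
    · rintro x ⟨⟨w, z⟩, ⟨hw, hz⟩, rfl⟩
      exact mem_convexHull_of_exists_fintype w z hw.1 hw.2 (fun i => hz i (Set.mem_univ i)) rfl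
  rw [himg]
  exact hDomComp.image hΦ

lemma gordan {n m s' : ℕ} (Q : Set ((Fin n → ℝ) × (Fin m → ℝ)))
    (hQc : IsClosed Q) (hQconv : Convex ℝ Q)
    (hQscale : ∀ t : ℝ, 0 ≤ t → ∀ q ∈ Q, t • q ∈ Q)
    (hQpointed : ∀ q ∈ Q, -q ∈ Q → q = 0)
    (L : ((Fin n → ℝ) × (Fin m → ℝ)) →ₗ[ℝ] (Fin s' → ℝ))
    (hL : ∀ q ∈ Q, q ≠ 0 → L q ≠ 0) :
    ∃ η : Fin s' → ℝ, ∀ q ∈ Q, q ≠ 0 → (L q) ⬝ᵥ η < 0 := by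
  set S := Q ∩ Metric.sphere 0 1 with hSdef
  have hScomp : IsCompact S := (isCompact_sphere 0 1).inter_left hQc
  -- Q \ {0} is convex
  have hQ0conv : Convex ℝ (Q \ {0}) := by
    intro a ha b hb ta tb hta htb hsum
    refine ⟨hQconv ha.1 hb.1 hta htb hsum, ?_⟩
    intro h0
    simp only [Set.mem_singleton_iff] at h0
    rcases eq_or_lt_of_le hta with h | h
    · rw [← h, zero_smul, zero_add] at h0
      have htb1 : tb = 1 := by linarith
      rw [htb1, one_smul] at h0
      exact hb.2 h0
    · have h1 : ta • a = -(tb • b) := by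
        have := h0
        rw [add_eq_zero_iff_eq_neg] at this
        exact this
      have h2 : tb • b ∈ Q := hQscale tb htb b hb.1
      have h3 : ta • a ∈ Q := hQscale ta (le_of_lt h) a ha.1
      have h4 : -(ta • a) ∈ Q := by rw [h1]; simpa using h2
      have h5 : ta • a = 0 := hQpointed _ h3 h4
      rcases smul_eq_zero.1 h5 with h6 | h6
      · exact absurd h6 (ne_of_gt h)
      · exact ha.2 h6
  have hsub : convexHull ℝ S ⊆ Q \ {0} := by
    apply convexHull_min _ hQ0conv
    intro q hq
    refine ⟨hq.1, ?_⟩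
    intro h0
    simp only [Set.mem_singleton_iff] at h0
    have := hq.2
    rw [h0] at this
    simp at this
  have hLcont : Continuous L := L.continuous_of_finiteDimensional
  have hDcomp : IsCompact (convexHull ℝ (L '' S)) :=
    isCompact_convexHull' (hScomp.image hLcont)
  have hDconv : Convex ℝ (convexHull ℝ (L '' S)) := convex_convexHull _ _
  have hD0 : (0 : Fin s' → ℝ) ∉ convexHull ℝ (L '' S) := by
    rw [← L.image_convexHull]
    rintro ⟨q, hq, hq0⟩
    have hqQ := hsub hq
    exact hL q hqQ.1 (fun h => hqQ.2 (by simp [h])) hq0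
  obtain ⟨φ, u, hfu, hub⟩ :=
    geometric_hahn_banach_point_closed hDconv hDcomp.isClosed hD0
  have hu0 : 0 < u := by simpa using hfu
  obtain ⟨w, hw⟩ := clm_exists_dot φ
  refine ⟨-w, ?_⟩
  intro q hq hq0
  have hnq : 0 < ‖q‖ := norm_pos_iff.2 hq0
  have hmem : (‖q‖⁻¹ • q) ∈ S := by
    constructor
    · exact hQscale _ (by positivity) q hq
    · simp [norm_smul, abs_of_pos (inv_pos.2 hnq), inv_mul_cancel₀ hnq.ne']
  have hlt : u < φ (L (‖q‖⁻¹ • q)) :=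
    hub _ (subset_convexHull _ _ ⟨_, hmem, rfl⟩)
  rw [_root_.map_smul, _root_.map_smul] at hlt
  have hφLq : 0 < φ (L q) := by
    have : (0:ℝ) < ‖q‖⁻¹ • φ (L q) := lt_trans hu0 hlt
    rw [smul_eq_mul] at this
    nlinarith [inv_pos.2 hnq]
  rw [hw] at hφLq
  rw [dotProduct_neg]
  linarith [hφLq]

def pairMap {s n m : ℕ} (Tf : (Fin s → ℝ) →L[ℝ] (Fin n → ℝ))
    (Tg : (Fin s → ℝ) →L[ℝ] (Fin m → ℝ)) :
    ((Fin n → ℝ) × (Fin m → ℝ)) →ₗ[ℝ] (Fin s → ℝ) where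
  toFun p := fun j => p.1 ⬝ᵥ Tf (Pi.single j 1) + p.2 ⬝ᵥ Tg (Pi.single j 1)
  map_add' p q := by
    funext j
    simp only [Prod.fst_add, Prod.snd_add, add_dotProduct, Pi.add_apply]
    ring
  map_smul' c p := by
    funext j
    simp only [Prod.smul_fst, Prod.smul_snd, smul_dotProduct, smul_eq_mul,
      RingHom.id_apply, Pi.smul_apply]
    ring

lemma pairMap_dot {s n m : ℕ} (Tf : (Fin s → ℝ) →L[ℝ] (Fin n → ℝ))
    (Tg : (Fin s → ℝ) →L[ℝ] (Fin m → ℝ)) (p : (Fin n → ℝ) × (Fin m → ℝ))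
    (η : Fin s → ℝ) :
    (pairMap Tf Tg p) ⬝ᵥ η = p.1 ⬝ᵥ Tf η + p.2 ⬝ᵥ Tg η := by
  rw [dot_clm_eq_sum Tf p.1 η, dot_clm_eq_sum Tg p.2 η, ← Finset.sum_add_distrib]
  show ∑ j, (pairMap Tf Tg p) j * η j = _
  apply Finset.sum_congr rfl
  intro j _
  show (p.1 ⬝ᵥ Tf (Pi.single j 1) + p.2 ⬝ᵥ Tg (Pi.single j 1)) * η j = _
  ring

/-- Consider the problem (P): C-minimize `f x` subject to `g x ∈ −K`, with `X ⊆ ℝ^s`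
open, `f, g` Fréchet differentiable (Jacobians `Jf`, `Jg`), and `C ⊆ ℝ^n`, `K ⊆ ℝ^m`
closed convex cones with vertex at the origin whose positive polar cones `C*`, `K*`
are pointed.  Then (P) is FJ-pseudoinvex iff every Fritz John stationary point of
(P) is a weakly efficient global solution of (P). -/
theorem stmt_13 {s n m : ℕ} (X : Set (Fin s → ℝ)) (hXopen : IsOpen X)
    (C : Set (Fin n → ℝ))
    (hC0 : (0 : Fin n → ℝ) ∈ C)
    (hCcone : ∀ t : ℝ, 0 < t → ∀ y ∈ C, t • y ∈ C)
    (hCclosed : IsClosed C) (hCconvex : Convex ℝ C)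
    (K : Set (Fin m → ℝ))
    (hK0 : (0 : Fin m → ℝ) ∈ K)
    (hKcone : ∀ t : ℝ, 0 < t → ∀ y ∈ K, t • y ∈ K)
    (hKclosed : IsClosed K) (hKconvex : Convex ℝ K)
    -- `C*` and `K*` are pointed:
    (hCpolarPointed : ∀ l, l ∈ polarCone C → -l ∈ polarCone C → l = 0)
    (hKpolarPointed : ∀ l, l ∈ polarCone K → -l ∈ polarCone K → l = 0)
    (f : (Fin s → ℝ) → (Fin n → ℝ))
    (Jf : (Fin s → ℝ) → ((Fin s → ℝ) →L[ℝ] (Fin n → ℝ)))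
    (hfdiff : ∀ x ∈ X, HasFDerivAt f (Jf x) x)
    (g : (Fin s → ℝ) → (Fin m → ℝ))
    (Jg : (Fin s → ℝ) → ((Fin s → ℝ) →L[ℝ] (Fin m → ℝ)))
    (hgdiff : ∀ x ∈ X, HasFDerivAt g (Jg x) x) :
    -- (P) is FJ-pseudoinvex ↔ every Fritz John stationary point is weakly efficient:
    (∀ x ∈ X, ∀ y ∈ X, ∃ η : Fin s → ℝ,
      f x - f y ∈ interior C → -g x ∈ K → -g y ∈ K →
        -(Jf x η) ∈ interior (polarCone (polarCone C)) ∧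
        -(Jg x η) ∈ interior (polarCone (Mstar K g x))) ↔
    (∀ x ∈ X, -g x ∈ K →
      (∃ lam ∈ polarCone C, ∃ mu ∈ polarCone K,
        ¬(lam = 0 ∧ mu = 0) ∧ (∀ v : Fin s → ℝ, lam ⬝ᵥ Jf x v + mu ⬝ᵥ Jg x v = 0) ∧
        mu ⬝ᵥ g x = 0) →
      ∀ y ∈ X, -g y ∈ K → f x - f y ∉ interior C) := by
  constructor
  · -- FJ-pseudoinvex → every FJ point is weakly efficient
    intro hPI x hx hgx hFJ y hy hgy hint
    obtain ⟨lam, hlam, mu, hmu, hne, hstat, hcomp⟩ := hFJ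
    obtain ⟨η, hη⟩ := hPI x hx y hy
    obtain ⟨h1, h2⟩ := hη hint hgx hgy
    have hmuM : mu ∈ Mstar K g x := ⟨hmu, hcomp⟩
    have hsum : lam ⬝ᵥ Jf x η + mu ⬝ᵥ Jg x η = 0 := hstat η
    have ha0 : 0 ≤ (-(Jf x η)) ⬝ᵥ lam := interior_subset h1 lam hlam
    have hb0 : 0 ≤ (-(Jg x η)) ⬝ᵥ mu := interior_subset h2 mu hmuM
    have hra : (-(Jf x η)) ⬝ᵥ lam = -(lam ⬝ᵥ Jf x η) := by
      rw [neg_dotProduct, dotProduct_comm]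
    have hrb : (-(Jg x η)) ⬝ᵥ mu = -(mu ⬝ᵥ Jg x η) := by
      rw [neg_dotProduct, dotProduct_comm]
    by_cases hl0 : lam = 0
    · have hm0 : mu ≠ 0 := fun h => hne ⟨hl0, h⟩
      have hbs : 0 < (-(Jg x η)) ⬝ᵥ mu := dot_pos_of_mem_interior_polar h2 hmuM hm0
      have ha : lam ⬝ᵥ Jf x η = 0 := by rw [hl0, zero_dotProduct]
      rw [hrb] at hbs
      linarith
    · have has : 0 < (-(Jf x η)) ⬝ᵥ lam := dot_pos_of_mem_interior_polar h1 hlam hl0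
      rw [hra] at has
      rw [hrb] at hb0
      linarith
  · -- every FJ point is weakly efficient → FJ-pseudoinvex
    intro hWE x hx y hy
    by_cases hcase : f x - f y ∈ interior C ∧ -g x ∈ K ∧ -g y ∈ K
    · obtain ⟨hint, hgx, hgy⟩ := hcase
      have hnFJ : ¬ (∃ lam ∈ polarCone C, ∃ mu ∈ polarCone K,
          ¬(lam = 0 ∧ mu = 0) ∧ (∀ v : Fin s → ℝ, lam ⬝ᵥ Jf x v + mu ⬝ᵥ Jg x v = 0) ∧
          mu ⬝ᵥ g x = 0) := fun hFJ => hWE x hx hgx hFJ y hy hgy hint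
      set Q : Set ((Fin n → ℝ) × (Fin m → ℝ)) :=
        (polarCone C) ×ˢ (Mstar K g x) with hQdef
      have hMclosed : IsClosed (Mstar K g x) := by
        have hM : Mstar K g x = polarCone K ∩ {μ | μ ⬝ᵥ g x = 0} := rfl
        rw [hM]
        exact (polarCone_isClosed K).inter
          (isClosed_eq (continuous_dot_right (g x)) continuous_const)
      have hMscale : ∀ t : ℝ, 0 ≤ t → ∀ l ∈ Mstar K g x, t • l ∈ Mstar K g x := by
        intro t ht l hl
        exact ⟨polarCone_smul K ht hl.1, by
          rw [smul_dotProduct, hl.2, smul_zero]⟩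
      have hMconv : Convex ℝ (Mstar K g x) := by
        intro a ha b hb ta tb hta htb hsum
        refine ⟨polarCone_convex K ha.1 hb.1 hta htb hsum, ?_⟩
        rw [add_dotProduct, smul_dotProduct, smul_dotProduct,
          ha.2, hb.2, smul_zero, smul_zero, add_zero]
      have hQc : IsClosed Q := (polarCone_isClosed C).prod hMclosed
      have hQconv : Convex ℝ Q := (polarCone_convex C).prod hMconv
      have hQscale : ∀ t : ℝ, 0 ≤ t → ∀ q ∈ Q, t • q ∈ Q := by
        intro t ht q hq
        exact ⟨polarCone_smul C ht hq.1, hMscale t ht q.2 hq.2⟩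
      have hQpointed : ∀ q ∈ Q, -q ∈ Q → q = 0 := by
        intro q hq hnq
        have h1 : q.1 = 0 := hCpolarPointed q.1 hq.1 hnq.1
        have h2 : q.2 = 0 := hKpolarPointed q.2 hq.2.1 hnq.2.1
        exact Prod.ext h1 h2
      set L := pairMap (Jf x) (Jg x) with hL
      have hLne : ∀ q ∈ Q, q ≠ 0 → L q ≠ 0 := by
        intro q hq hq0 hLq
        apply hnFJ
        refine ⟨q.1, hq.1, q.2, hq.2.1, ?_, ?_, hq.2.2⟩
        · intro ⟨ha, hb⟩
          exact hq0 (Prod.ext ha hb)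
        · intro v
          have := pairMap_dot (Jf x) (Jg x) q v
          rw [← hL, hLq, zero_dotProduct] at this
          exact this.symm
      obtain ⟨η, hη⟩ := gordan Q hQc hQconv hQscale hQpointed L hLne
      refine ⟨η, fun _ _ _ => ⟨?_, ?_⟩⟩
      · apply mem_interior_polar_of_dot_pos (polarCone_isClosed C)
          (fun t ht l hl => polarCone_smul C ht hl)
        intro l hl hl0
        have hqQ : ((l, 0) : (Fin n → ℝ) × (Fin m → ℝ)) ∈ Q :=
          ⟨hl, polarCone_zero_mem K, by rw [zero_dotProduct]⟩
        have hq0 : ((l, 0) : (Fin n → ℝ) × (Fin m → ℝ)) ≠ 0 := by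
          intro h
          exact hl0 (congrArg Prod.fst h)
        have hlt := hη _ hqQ hq0
        rw [hL, pairMap_dot (Jf x) (Jg x)] at hlt
        simp only [zero_dotProduct, add_zero] at hlt
        rw [dotProduct_neg]
        linarith
      · apply mem_interior_polar_of_dot_pos hMclosed hMscale
        intro l hl hl0
        have hqQ : ((0, l) : (Fin n → ℝ) × (Fin m → ℝ)) ∈ Q :=
          ⟨polarCone_zero_mem C, hl⟩
        have hq0 : ((0, l) : (Fin n → ℝ) × (Fin m → ℝ)) ≠ 0 := by
          intro h
          exact hl0 (congrArg Prod.snd h)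
        have hlt := hη _ hqQ hq0
        rw [hL, pairMap_dot (Jf x) (Jg x)] at hlt
        simp only [zero_dotProduct, zero_add] at hlt
        rw [dotProduct_neg]
        linarith
    · exact ⟨0, fun h1 h2 h3 => absurd ⟨h1, h2, h3⟩ hcase⟩
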